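/- arXiv:1707.02610 — 3 statements merged into one kernel-verified Lean document; each statement's English description precedes it below -/
import Mathlib

section
/- AP = 1 if and only if all relevant items occupy the top |Rel| positions of the ranking, i.e., O[j] ∈ Rel for all j ≤ |Rel|. -/
/-- Number of relevant items among the top `j` positions of the ranking `O`
(positions are 1-based; index `k : Fin n` corresponds to position `k+1`). -/
def relCount {α : Type} [DecidableEq α] {n : ℕ} (O : Fin n → α) (Rel : Finset α)
    (j : ℕ) : ℕ :=
  (Finset.univ.filter (fun k : Fin n => (k : ℕ) < j ∧ O k ∈ Rel)).card

/-- Precision at position `j`: fraction of relevant items among the top `j`. -/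
noncomputable def prec {α : Type} [DecidableEq α] {n : ℕ} (O : Fin n → α)
    (Rel : Finset α) (j : ℕ) : ℝ :=
  (relCount O Rel j : ℝ) / (j : ℝ)

/-- Average precision of the ranking `O` with relevant set `Rel`. -/
noncomputable def AP {α : Type} [DecidableEq α] {n : ℕ} (O : Fin n → α)
    (Rel : Finset α) : ℝ :=
  (Rel.card : ℝ)⁻¹ *
    ∑ j ∈ Finset.univ.filter (fun j : Fin n => O j ∈ Rel), prec O Rel ((j : ℕ) + 1)

lemma card_filter_val_lt {n m : ℕ} (h : m ≤ n) :
    (Finset.univ.filter (fun k : Fin n => (k : ℕ) < m)).card = m := by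
  rw [← Finset.card_range m]
  apply Finset.card_nbij (fun k : Fin n => (k : ℕ))
  · intro k hk
    simp only [Finset.mem_coe, Finset.mem_filter, Finset.mem_univ, true_and] at hk
    simpa using hk
  · intro a _ b _ hab
    exact Fin.ext hab
  · intro a ha
    simp only [Finset.coe_range, Set.mem_Iio] at ha
    exact ⟨⟨a, lt_of_lt_of_le ha h⟩, by simpa using ha, rfl⟩

/-- AP = 1 iff all relevant items occupy the top |Rel| positions. -/
theorem AP_eq_one_iff {α : Type} [Fintype α] [DecidableEq α] {n : ℕ}
    (O : Fin n → α) (hO : Function.Bijective O)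
    (Rel : Finset α) (hRel : Rel.Nonempty) :
    AP O Rel = 1 ↔ ∀ j : Fin n, (j : ℕ) < Rel.card → O j ∈ Rel := by
  classical
  have hn : Fintype.card α = n := by
    rw [← Fintype.card_of_bijective hO, Fintype.card_fin]
  have hRn : Rel.card ≤ n := hn ▸ Finset.card_le_univ Rel
  set S := Finset.univ.filter (fun j : Fin n => O j ∈ Rel) with hSdef
  have himg : S.image O = Rel := by
    ext a
    simp only [Finset.mem_image, hSdef, Finset.mem_filter, Finset.mem_univ, true_and]
    constructor
    · rintro ⟨j, hj, rfl⟩; exact hj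
    · intro ha; obtain ⟨j, rfl⟩ := hO.surjective a; exact ⟨j, ha, rfl⟩
  have hcardS : S.card = Rel.card := by
    rw [← himg, Finset.card_image_of_injective _ hO.injective]
  have hterm_le : ∀ j : Fin n, prec O Rel ((j : ℕ) + 1) ≤ 1 := by
    intro j
    have hb : relCount O Rel ((j : ℕ) + 1) ≤ (j : ℕ) + 1 := by
      unfold relCount
      calc (Finset.univ.filter (fun k : Fin n => (k : ℕ) < (j : ℕ) + 1 ∧ O k ∈ Rel)).card
          ≤ (Finset.univ.filter (fun k : Fin n => (k : ℕ) < (j : ℕ) + 1)).card :=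
            Finset.card_le_card (Finset.monotone_filter_right _ (fun k _ hk => hk.1))
        _ = (j : ℕ) + 1 := card_filter_val_lt j.isLt
    unfold prec
    rw [div_le_one (by positivity)]
    exact_mod_cast hb
  have hterm_nonneg : ∀ j : Fin n, 0 ≤ prec O Rel ((j : ℕ) + 1) := by
    intro j; unfold prec; positivity
  -- characterization of prec = 1
  have hchar : ∀ j : Fin n, (prec O Rel ((j : ℕ) + 1) = 1 ↔
      ∀ k : Fin n, (k : ℕ) ≤ (j : ℕ) → O k ∈ Rel) := by
    intro j
    unfold prec
    rw [div_eq_one_iff_eq (by positivity)]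
    rw [show (((j : ℕ) + 1 : ℕ) : ℝ) = (((j : ℕ) + 1 : ℕ) : ℝ) from rfl]
    norm_cast
    unfold relCount
    constructor
    · intro hcount k hk
      have hsub : Finset.univ.filter (fun k : Fin n => (k : ℕ) < (j : ℕ) + 1 ∧ O k ∈ Rel) ⊆
          Finset.univ.filter (fun k : Fin n => (k : ℕ) < (j : ℕ) + 1) :=
        Finset.monotone_filter_right _ (fun k _ hk => hk.1)
      have hle : (Finset.univ.filter (fun k : Fin n => (k : ℕ) < (j : ℕ) + 1)).card ≤
          (Finset.univ.filter (fun k : Fin n => (k : ℕ) < (j : ℕ) + 1 ∧ O k ∈ Rel)).card := by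
        rw [hcount, card_filter_val_lt j.isLt]
      have heq := Finset.eq_of_subset_of_card_le hsub hle
      have : k ∈ Finset.univ.filter (fun k : Fin n => (k : ℕ) < (j : ℕ) + 1) := by
        simp [Nat.lt_succ_iff, hk]
      rw [← heq] at this
      simp only [Finset.mem_filter] at this
      exact this.2.2
    · intro hall
      have : Finset.univ.filter (fun k : Fin n => (k : ℕ) < (j : ℕ) + 1 ∧ O k ∈ Rel) =
          Finset.univ.filter (fun k : Fin n => (k : ℕ) < (j : ℕ) + 1) := by
        apply Finset.filter_congr
        intro k _
        simp only [and_iff_left_iff_imp]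
        intro hk
        exact hall k (Nat.lt_succ_iff.mp hk)
      rw [this, card_filter_val_lt j.isLt]
  have hRpos : (0 : ℝ) < (Rel.card : ℝ) := by
    exact_mod_cast hRel.card_pos
  have key : AP O Rel = 1 ↔ ∀ j ∈ S, prec O Rel ((j : ℕ) + 1) = 1 := by
    unfold AP
    rw [inv_mul_eq_one₀ (ne_of_gt hRpos)]
    rw [← hSdef]
    constructor
    · intro hsum j hj
      by_contra hne
      have hlt : prec O Rel ((j : ℕ) + 1) < 1 := lt_of_le_of_ne (hterm_le j) hne
      have : (∑ i ∈ S, prec O Rel ((i : ℕ) + 1)) < ∑ i ∈ S, (1 : ℝ) := by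
        apply Finset.sum_lt_sum (fun i _ => hterm_le i) ⟨j, hj, hlt⟩
      rw [Finset.sum_const, nsmul_eq_mul, mul_one, hcardS] at this
      linarith [hsum]
    · intro hall
      rw [Finset.sum_congr rfl hall, Finset.sum_const, nsmul_eq_mul, mul_one, hcardS]
  rw [key]
  constructor
  · -- forward: each prec = 1 ⇒ top-R relevant
    intro hall j hj
    have hSne : S.Nonempty := by
      rw [← Finset.card_pos, hcardS]; exact hRel.card_pos
    set m := S.max' hSne with hm
    have hmS : m ∈ S := S.max'_mem hSne
    have hSeq : S = Finset.univ.filter (fun k : Fin n => (k : ℕ) < (m : ℕ) + 1) := by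
      apply Finset.Subset.antisymm
      · intro k hk
        have := S.le_max' k hk
        simp only [Finset.mem_filter, Finset.mem_univ, true_and, Nat.lt_succ_iff]
        exact this
      · intro k hk
        simp only [Finset.mem_filter, Finset.mem_univ, true_and, Nat.lt_succ_iff] at hk
        have hmRel : O m ∈ Rel := by
          simpa [hSdef] using hmS
        have := (hchar m).mp (hall m hmS) k hk
        simpa [hSdef] using this
    have hRm : Rel.card = (m : ℕ) + 1 := by
      rw [← hcardS, hSeq, card_filter_val_lt m.isLt]
    have hjm : (j : ℕ) < (m : ℕ) + 1 := by omega
    have hjS : j ∈ S := by rw [hSeq]; simpa using hjm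
    simpa [hSdef] using hjS
  · -- backward: top-R relevant ⇒ each prec = 1
    intro htop j hj
    have hTsub : Finset.univ.filter (fun k : Fin n => (k : ℕ) < Rel.card) ⊆ S := by
      intro k hk
      simp only [Finset.mem_filter, Finset.mem_univ, true_and] at hk
      simp only [hSdef, Finset.mem_filter, Finset.mem_univ, true_and]
      exact htop k hk
    have hTeq : Finset.univ.filter (fun k : Fin n => (k : ℕ) < Rel.card) = S := by
      apply Finset.eq_of_subset_of_card_le hTsub
      rw [hcardS, card_filter_val_lt hRn]
    have hjR : (j : ℕ) < Rel.card := by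
      have : j ∈ Finset.univ.filter (fun k : Fin n => (k : ℕ) < Rel.card) := by
        rw [hTeq]; exact hj
      simpa using this
    rw [hchar j]
    intro k hk
    exact htop k (lt_of_le_of_lt hk hjR)
end

section
/- The minimal possible AP over all rankings, with |Rel| = p relevant items among n total, is achieved by placing all relevant items at the bottom, giving AP = (1/p) · Σ_{i=1}^{p} i/(n - p + i). -/
lemma orderEmb_add_le {p n : ℕ} (e : Fin p ↪o Fin n) :
    ∀ d (i j : Fin p), (i : ℕ) + d = (j : ℕ) → (e i : ℕ) + d ≤ (e j : ℕ) := by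
  intro d
  induction d with
  | zero =>
    intro i j h
    have : i = j := Fin.ext (by omega)
    simp [this]
  | succ d ih =>
    intro i j h
    have hj' : (i : ℕ) + d < p := by omega
    have h1 : (e i : ℕ) + d ≤ (e ⟨(i:ℕ) + d, hj'⟩ : ℕ) := ih i _ rfl
    have h2 : (e ⟨(i:ℕ) + d, hj'⟩ : ℕ) < (e j : ℕ) := by
      have hlt : (⟨(i:ℕ) + d, hj'⟩ : Fin p) < j := by
        simp only [Fin.lt_def]; omega
      exact e.strictMono hlt
    omega

/-- Worst-case AP: for any ranking with p relevant items among n,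
AP ≥ (1/p) Σ_{i=1}^p i/(n-p+i), the value attained by placing all relevant
items at the bottom. -/
theorem AP_ge_worst {α : Type} [Fintype α] [DecidableEq α] {n p : ℕ}
    (hn : Fintype.card α = n)
    (O : Fin n → α) (hO : Function.Bijective O)
    (Rel : Finset α) (hp : Rel.card = p) (hp1 : 1 ≤ p) :
    AP O Rel ≥ (p : ℝ)⁻¹ * ∑ i ∈ Finset.Icc 1 p, (i : ℝ) / ((n - p + i : ℕ) : ℝ) := by
  classical
  set S : Finset (Fin n) := Finset.univ.filter (fun j : Fin n => O j ∈ Rel) with hSdef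
  have himg : S.image O = Rel := by
    ext x
    simp only [Finset.mem_image, hSdef, Finset.mem_filter, Finset.mem_univ, true_and]
    constructor
    · rintro ⟨j, hj, rfl⟩; exact hj
    · intro hx; obtain ⟨j, rfl⟩ := hO.2 x; exact ⟨j, hx, rfl⟩
  have hScard : S.card = p := by
    rw [← hp, ← himg, Finset.card_image_of_injective _ hO.1]
  have hpn : p ≤ n := by
    rw [← hScard]
    simpa using Finset.card_le_univ S
  set e := S.orderEmbOfFin hScard with hedef
  have hmemS : ∀ k : Fin n, k ∈ S ↔ ∃ i : Fin p, e i = k := by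
    intro k
    constructor
    · intro hk
      have : k ∈ Set.range e := by
        rw [hedef, Finset.range_orderEmbOfFin]; exact hk
      exact this
    · rintro ⟨i, rfl⟩; exact Finset.orderEmbOfFin_mem S hScard i
  have hbound : ∀ i : Fin p, (e i : ℕ) ≤ n - p + (i : ℕ) := by
    intro i
    have hi : (i : ℕ) < p := i.isLt
    have hlast : (p - 1 : ℕ) < p := by omega
    have h1 : (e i : ℕ) + (p - 1 - (i : ℕ)) ≤ (e ⟨p - 1, hlast⟩ : ℕ) :=
      orderEmb_add_le e _ i ⟨p - 1, hlast⟩ (by simp; omega)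
    have h2 : (e ⟨p - 1, hlast⟩ : ℕ) < n := (e ⟨p - 1, hlast⟩).isLt
    omega
  have hrel : ∀ i : Fin p, relCount O Rel ((e i : ℕ) + 1) = (i : ℕ) + 1 := by
    intro i
    have hfe : Finset.univ.filter (fun k : Fin n => (k : ℕ) < (e i : ℕ) + 1 ∧ O k ∈ Rel)
        = (Finset.Iic i).image e := by
      ext k
      simp only [Finset.mem_filter, Finset.mem_univ, true_and, Finset.mem_image,
        Finset.mem_Iic, Nat.lt_succ_iff]
      constructor
      · rintro ⟨hk1, hk2⟩
        obtain ⟨m, rfl⟩ := (hmemS k).1 (by simp [hSdef, hk2])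
        refine ⟨m, ?_, rfl⟩
        exact e.le_iff_le.mp (by exact Fin.le_def.mpr hk1)
      · rintro ⟨m, hm, rfl⟩
        have h1 : e m ≤ e i := e.le_iff_le.mpr hm
        have h2 : e m ∈ S := Finset.orderEmbOfFin_mem S hScard m
        simp only [hSdef, Finset.mem_filter] at h2
        exact ⟨h1, h2.2⟩
    rw [relCount, hfe, Finset.card_image_of_injective _ e.injective, Fin.card_Iic]
  have hsum : ∑ j ∈ S, prec O Rel ((j : ℕ) + 1) = ∑ i : Fin p, prec O Rel ((e i : ℕ) + 1) := by
    refine (Finset.sum_bij (fun i _ => e i) ?_ ?_ ?_ ?_).symm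
    · intro i _; exact Finset.orderEmbOfFin_mem S hScard i
    · intro a _ b _ h; exact e.injective h
    · intro k hk
      obtain ⟨i, rfl⟩ := (hmemS k).1 hk
      exact ⟨i, Finset.mem_univ i, rfl⟩
    · intros; rfl
  have hprec : ∀ i : Fin p, prec O Rel ((e i : ℕ) + 1)
      = (((i : ℕ) + 1 : ℕ) : ℝ) / (((e i : ℕ) + 1 : ℕ) : ℝ) := by
    intro i
    rw [prec, hrel i]
  have hRHS : ∑ i ∈ Finset.Icc 1 p, (i : ℝ) / ((n - p + i : ℕ) : ℝ)
      = ∑ i : Fin p, (((i : ℕ) + 1 : ℕ) : ℝ) / (((n - p + (i : ℕ) + 1 : ℕ)) : ℝ) := by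
    refine (Finset.sum_bij' (fun (i : Fin p) (_ : i ∈ Finset.univ) => (i : ℕ) + 1)
      (fun (j : ℕ) (hj : j ∈ Finset.Icc 1 p) =>
        (⟨j - 1, by simp only [Finset.mem_Icc] at hj; omega⟩ : Fin p))
      ?_ ?_ ?_ ?_ ?_).symm
    · intro i _; simp [Finset.mem_Icc]
    · intro j hj; exact Finset.mem_univ _
    · intro i _; simp
    · intro j hj; simp only [Finset.mem_Icc] at hj; simp; omega
    · intro i _
      congr 2 <;> omega
  rw [ge_iff_le, AP, hp, ← hSdef, hsum, hRHS]
  apply mul_le_mul_of_nonneg_left _ (by positivity)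
  apply Finset.sum_le_sum
  intro i _
  rw [hprec i]
  apply div_le_div_of_nonneg_left (by positivity) (by positivity)
  have : (e i : ℕ) + 1 ≤ n - p + (i : ℕ) + 1 := by have := hbound i; omega
  exact_mod_cast this
end

section
/- Swapping a relevant item at position j with an irrelevant item at position j+1 (relevant item moved up) does not decrease AP; in fact it strictly increases AP. -/
/-- Swapping a relevant item at position j+1 up to position j (where an
irrelevant item sits) strictly increases AP. -/
theorem AP_swap_up {α : Type} [Fintype α] [DecidableEq α] {n : ℕ}
    (O : Fin n → α) (hO : Function.Bijective O)
    (Rel : Finset α) (hRel : Rel.Nonempty)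
    (j j' : Fin n) (hjj' : (j' : ℕ) = (j : ℕ) + 1)
    (hj' : O j' ∈ Rel) (hj : O j ∉ Rel) :
    AP (O ∘ Equiv.swap j j') Rel > AP O Rel := by
  classical
  set O' := O ∘ Equiv.swap j j' with hO'def
  have hjne : j ≠ j' := by
    intro h; rw [h] at hjj'; omega
  have hOj : O' j = O j' := by simp [hO'def, Equiv.swap_apply_left]
  have hOj' : O' j' = O j := by simp [hO'def, Equiv.swap_apply_right]
  have hOk : ∀ k : Fin n, k ≠ j → k ≠ j' → O' k = O k := by
    intro k h1 h2; simp [hO'def, Equiv.swap_apply_of_ne_of_ne h1 h2]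
  -- relCount is unchanged at thresholds away from j+1
  have relCount_eq : ∀ t : ℕ, t ≤ (j : ℕ) ∨ (j : ℕ) + 2 ≤ t →
      relCount O' Rel t = relCount O Rel t := by
    intro t ht
    have hlt : ∀ k : Fin n, ((Equiv.swap j j' k : Fin n) : ℕ) < t ↔ (k : ℕ) < t := by
      intro k
      rcases eq_or_ne k j with rfl | h1
      · rw [Equiv.swap_apply_left]; omega
      rcases eq_or_ne k j' with rfl | h2
      · rw [Equiv.swap_apply_right]; omega
      · rw [Equiv.swap_apply_of_ne_of_ne h1 h2]
    unfold relCount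
    have himg : (Finset.univ.filter (fun k : Fin n => (k : ℕ) < t ∧ O' k ∈ Rel))
        = Finset.image (Equiv.swap j j')
            (Finset.univ.filter (fun k : Fin n => (k : ℕ) < t ∧ O k ∈ Rel)) := by
      ext k
      simp only [Finset.mem_image, Finset.mem_filter, Finset.mem_univ, true_and,
        hO'def, Function.comp]
      constructor
      · rintro ⟨h1, h2⟩
        exact ⟨Equiv.swap j j' k, ⟨(hlt k).2 h1, h2⟩, by simp⟩
      · rintro ⟨a, ⟨ha1, ha2⟩, rfl⟩
        exact ⟨(hlt a).2 ha1, by simpa using ha2⟩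
    rw [himg, Finset.card_image_of_injective _ (Equiv.injective _)]
  have hc1 : relCount O' Rel ((j : ℕ) + 1) = relCount O Rel ((j : ℕ) + 1) + 1 := by
    unfold relCount
    have hfe : (Finset.univ.filter fun k : Fin n => (k : ℕ) < (j : ℕ) + 1 ∧ O' k ∈ Rel)
        = insert j (Finset.univ.filter fun k : Fin n => (k : ℕ) < (j : ℕ) + 1 ∧ O k ∈ Rel) := by
      ext k
      simp only [Finset.mem_insert, Finset.mem_filter, Finset.mem_univ, true_and]
      rcases eq_or_ne k j with rfl | h1
      · simp [hOj, hj']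
      rcases eq_or_ne k j' with rfl | h2
      · constructor
        · rintro ⟨h, _⟩; omega
        · rintro (h | ⟨h, _⟩)
          · exact absurd h (Ne.symm hjne).elim
          · omega
      · rw [hOk k h1 h2]; simp [h1]
    rw [hfe, Finset.card_insert_of_notMem (by simp [hj])]
  have hc2 : relCount O Rel ((j : ℕ) + 2) = relCount O Rel ((j : ℕ) + 1) + 1 := by
    unfold relCount
    have hfe : (Finset.univ.filter fun k : Fin n => (k : ℕ) < (j : ℕ) + 2 ∧ O k ∈ Rel)
        = insert j' (Finset.univ.filter fun k : Fin n => (k : ℕ) < (j : ℕ) + 1 ∧ O k ∈ Rel) := by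
      ext k
      simp only [Finset.mem_insert, Finset.mem_filter, Finset.mem_univ, true_and]
      rcases eq_or_ne k j' with rfl | h2
      · simp [hj']; omega
      · have hkv : (k : ℕ) ≠ (j : ℕ) + 1 := by
          intro h
          exact h2 (Fin.ext (h.trans hjj'.symm))
        constructor
        · rintro ⟨h, hr⟩; exact Or.inr ⟨by omega, hr⟩
        · rintro (h | ⟨h, hr⟩)
          · exact absurd h h2
          · exact ⟨by omega, hr⟩
    rw [hfe, Finset.card_insert_of_notMem (by simp [hjj']; intro h; rw [Fin.le_def] at h; omega)]
  -- index sets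
  set S := Finset.univ.filter (fun i : Fin n => O i ∈ Rel) with hSdef
  have hj'S : j' ∈ S := by simp [hSdef, hj']
  have hjS : j ∉ S := by simp [hSdef, hj]
  have hS' : (Finset.univ.filter fun i : Fin n => O' i ∈ Rel) = insert j (S.erase j') := by
    ext k
    simp only [Finset.mem_insert, Finset.mem_erase, Finset.mem_filter, Finset.mem_univ,
      true_and, hSdef]
    rcases eq_or_ne k j with rfl | h1
    · simp [hOj, hj']
    rcases eq_or_ne k j' with rfl | h2
    · simp [hOj', hj, h1]
    · rw [hOk k h1 h2]; simp [h1, h2]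
  have hterm : ∀ i ∈ S.erase j', prec O' Rel ((i : ℕ) + 1) = prec O Rel ((i : ℕ) + 1) := by
    intro i hi
    have h2 : i ≠ j' := (Finset.mem_erase.1 hi).1
    have h1 : (i : ℕ) ≠ (j : ℕ) := by
      intro h
      have : i = j := Fin.ext h
      subst this
      exact hjS (Finset.mem_of_mem_erase hi)
    unfold prec
    rw [relCount_eq ((i : ℕ) + 1) (by omega)]
  unfold AP
  have hRHS : ∑ i ∈ S, prec O Rel ((i : ℕ) + 1)
      = prec O Rel ((j' : ℕ) + 1) + ∑ i ∈ S.erase j', prec O Rel ((i : ℕ) + 1) := by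
    rw [← Finset.sum_erase_add S _ hj'S]; exact (add_comm _ _)
  rw [hS', Finset.sum_insert (fun h => hjS (Finset.mem_of_mem_erase h)), hRHS,
    Finset.sum_congr rfl hterm]
  have hcardpos : (0 : ℝ) < (Rel.card : ℝ)⁻¹ := by
    rw [inv_pos]
    exact_mod_cast Finset.card_pos.2 hRel
  apply mul_lt_mul_of_pos_left _ hcardpos
  refine add_lt_add_of_lt_of_le ?_ le_rfl
  unfold prec
  rw [hc1, hjj', hc2]
  push_cast
  have hpos : (0 : ℝ) < (relCount O Rel ((j : ℕ) + 1) : ℝ) + 1 := by positivity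
  have h1 : (0 : ℝ) < (j : ℕ) + 1 := by positivity
  exact div_lt_div_of_pos_left hpos h1 (by norm_num)
end
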